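/- Over a field of characteristic zero (or any integral domain in which the relevant binomial coefficients are nonzero), the symmetric product has no zero divisors: A ⊙ B = 0 if and only if A = 0 or B = 0. -/

import Mathlib

/-! Multi-index matrices and their symmetric product (Bekbaev). -/

/-- Multi-indices: `n`-tuples of nonnegative integers. -/
abbrev MultiIndex (n : ℕ) := Fin n →₀ ℕ

namespace SymProd

variable {n : ℕ} {R : Type*} [CommRing R]

/-- `|α| = α₁ + ⋯ + αₙ`. -/
def deg (α : MultiIndex n) : ℕ := α.sum fun _ v => v

/-- `α! = α₁! ⋯ αₙ!`. -/
def mfact (α : MultiIndex n) : ℕ := α.prod fun _ v => v.factorial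

/-- The multinomial coefficient `C(α,β) = α!/(β!(α−β)!) = ∏ᵢ C(αᵢ,βᵢ)`. -/
def mchoose (α β : MultiIndex n) : ℕ := ∏ i ∈ α.support ∪ β.support, (α i).choose (β i)

/-- A "matrix" indexed by pairs of multi-indices (row index first). A matrix in
`M(p',p;R)` is such a function supported on rows of degree `p'` and columns of degree `p`. -/
abbrev Mat (n : ℕ) (R : Type*) := MultiIndex n → MultiIndex n → R

/-- `A` belongs to `M(p',p;R)`: supported on rows `α'` with `|α'| = p'` and columns `α`
with `|α| = p`. -/
def IsHom (p' p : ℕ) (A : Mat n R) : Prop :=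
  ∀ α' α, A α' α ≠ 0 → deg α' = p' ∧ deg α = p

/-- The symmetric product
`(A ⊙ B)^{α'}_α = ∑_{β' ≪ α', β ≪ α} C(α,β) A^{β'}_β B^{α'−β'}_{α−β}`.
For `A ∈ M(p',p;R)` and `B ∈ M(q',q;R)` this agrees with Bekbaev's Definition 1
(the degree restrictions on `β, β'` hold automatically on the support of `A`). -/
noncomputable def odot (A B : Mat n R) : Mat n R := fun α' α =>
  ∑ β' ∈ Finset.Iic α', ∑ β ∈ Finset.Iic α,
    (mchoose α β : R) * A β' β * B (α' - β') (α - β)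

/-- The identity element `1 ∈ Mat(R)`: the `(0,0)` block is `1`. -/
def matOne : Mat n R := fun α' α => if α' = 0 ∧ α = 0 then 1 else 0

/-- `A^{⊙m}`, the `m`-th symmetric power. -/
noncomputable def sympow (A : Mat n R) : ℕ → Mat n R
  | 0 => matOne
  | m + 1 => odot (sympow A m) A

/-- The row vector `h = (h₁,…,hₙ) ∈ M(0,1;R)` attached to `h : Fin n → R`. -/
noncomputable def rowVec (h : Fin n → R) : Mat n R := fun α' α =>
  if α' = 0 then ∑ j : Fin n, (if α = Finsupp.single j 1 then h j else 0) else 0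

/-- Multi-indices of degree `w` (a finite set). -/
noncomputable def degSet (n w : ℕ) : Finset (MultiIndex n) :=
  (Finset.Iic (Finsupp.equivFunOnFinite.symm fun _ : Fin n => w)).filter fun β => deg β = w

/-- Ordinary matrix product of `v ∈ M(0,w;R)` with `A ∈ M(p',w;R)`, contracting the
weight-`w` index (the columns of `A`, via transposition): the result, in `M(0,p';R)`,
has entries `(v·A)^{α'}_α = ∑_{|β| = w} v^{α'}_β A^{α}_β`. -/
noncomputable def vecMul (w : ℕ) (v A : Mat n R) : Mat n R := fun α' α =>
  ∑ β ∈ degSet n w, v α' β * A α β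

end SymProd

section AuxOdot
open SymProd

-- auxiliary lemmas
lemma mem_degSet {n w : ℕ} {β : MultiIndex n} (h : deg β = w) : β ∈ degSet n w := by
  refine Finset.mem_filter.2 ⟨Finset.mem_Iic.2 ?_, h⟩
  intro i
  simp only [Finsupp.coe_equivFunOnFinite_symm]
  calc β i ≤ deg β := by
        rw [deg, Finsupp.sum]
        by_cases hi : i ∈ β.support
        · exact Finset.single_le_sum (fun _ _ => Nat.zero_le _) hi
        · simp [Finsupp.notMem_support_iff.1 hi]
    _ = w := h

lemma mchoose_pos {n : ℕ} (a b : MultiIndex n) : 0 < mchoose (a + b) a := by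
  apply Finset.prod_pos
  intro i _
  exact Nat.choose_pos (by simp)

-- cancellation in a linear ordered cancel monoid
lemma cancel_max {M : Type*} [AddCommMonoid M] [LinearOrder M] [IsOrderedCancelAddMonoid M]
    {x a y b : M} (hx : x ≤ a) (hy : y ≤ b) (h : x + y = a + b) : x = a ∧ y = b := by
  constructor
  · by_contra hne
    have : x + y < a + b := add_lt_add_of_lt_of_le (lt_of_le_of_ne hx hne) hy
    exact absurd h (ne_of_lt this)
  · by_contra hne
    have : x + y < a + b := add_lt_add_of_le_of_lt hx (lt_of_le_of_ne hy hne)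
    exact absurd h (ne_of_lt this)


end AuxOdot

open SymProd in
/-- over a field of characteristic zero the symmetric product has no zero
divisors: for `A ∈ M(p',p;F)`, `B ∈ M(q',q;F)`, `A ⊙ B = 0` iff `A = 0` or `B = 0`. -/
theorem odot_eq_zero_iff {n : ℕ} (F : Type*) [Field F] [CharZero F] {p' p q' q : ℕ}
    (A B : Mat n F) (hA : IsHom p' p A) (hB : IsHom q' q B) :
    odot A B = 0 ↔ A = 0 ∨ B = 0 := by
  classical
  constructor
  · intro h
    by_contra hc
    push_neg at hc
    obtain ⟨hA0, hB0⟩ := hc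
    -- extract nonzero entries
    obtain ⟨x', x, hx⟩ : ∃ x' x, A x' x ≠ 0 := by
      by_contra hcon; push_neg at hcon
      exact hA0 (funext fun α' => funext fun α => hcon α' α)
    obtain ⟨y', y, hy⟩ : ∃ y' y, B y' y ≠ 0 := by
      by_contra hcon; push_neg at hcon
      exact hB0 (funext fun α' => funext fun α => hcon α' α)
    -- row finsets (as Lex multi-indices)
    let rowsA : Finset (Lex (MultiIndex n)) :=
      (degSet n p').filter fun β' => ∃ β, A (ofLex β') β ≠ 0
    let rowsB : Finset (Lex (MultiIndex n)) :=
      (degSet n q').filter fun β' => ∃ β, B (ofLex β') β ≠ 0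
    have hrA : rowsA.Nonempty :=
      ⟨toLex x', Finset.mem_filter.2 ⟨mem_degSet (hA _ _ hx).1, ⟨x, hx⟩⟩⟩
    have hrB : rowsB.Nonempty :=
      ⟨toLex y', Finset.mem_filter.2 ⟨mem_degSet (hB _ _ hy).1, ⟨y, hy⟩⟩⟩
    set a' : Lex (MultiIndex n) := rowsA.max' hrA with ha'def
    set b' : Lex (MultiIndex n) := rowsB.max' hrB with hb'def
    -- column finsets for those rows
    let colsA : Finset (Lex (MultiIndex n)) :=
      (degSet n p).filter fun β => A (ofLex a') (ofLex β) ≠ 0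
    let colsB : Finset (Lex (MultiIndex n)) :=
      (degSet n q).filter fun β => B (ofLex b') (ofLex β) ≠ 0
    have hcA : colsA.Nonempty := by
      have := Finset.max'_mem rowsA hrA
      rw [← ha'def] at this
      obtain ⟨β, hβ⟩ := (Finset.mem_filter.1 this).2
      exact ⟨toLex β, Finset.mem_filter.2 ⟨mem_degSet (hA _ _ hβ).2, hβ⟩⟩
    have hcB : colsB.Nonempty := by
      have := Finset.max'_mem rowsB hrB
      rw [← hb'def] at this
      obtain ⟨β, hβ⟩ := (Finset.mem_filter.1 this).2
      exact ⟨toLex β, Finset.mem_filter.2 ⟨mem_degSet (hB _ _ hβ).2, hβ⟩⟩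
    set a : Lex (MultiIndex n) := colsA.max' hcA with hadef
    set b : Lex (MultiIndex n) := colsB.max' hcB with hbdef
    have hAa : A (ofLex a') (ofLex a) ≠ 0 := by
      have := Finset.max'_mem colsA hcA
      rw [← hadef] at this
      exact (Finset.mem_filter.1 this).2
    have hBb : B (ofLex b') (ofLex b) ≠ 0 := by
      have := Finset.max'_mem colsB hcB
      rw [← hbdef] at this
      exact (Finset.mem_filter.1 this).2
    -- the target entry
    set α' : MultiIndex n := ofLex a' + ofLex b' with hα'
    set α : MultiIndex n := ofLex a + ofLex b with hα
    -- key claim: every term except (a', a) vanishes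
    have key : ∀ β' ∈ Finset.Iic α', ∀ β ∈ Finset.Iic α,
        (β' ≠ ofLex a' ∨ β ≠ ofLex a) →
        (mchoose α β : F) * A β' β * B (α' - β') (α - β) = 0 := by
      intro β' hβ' β hβ hne
      by_contra hterm
      have hAβ : A β' β ≠ 0 := fun h0 => hterm (by simp [h0])
      have hBβ : B (α' - β') (α - β) ≠ 0 := fun h0 => hterm (by simp [h0])
      have hle' : β' ≤ α' := Finset.mem_Iic.1 hβ'
      have hle : β ≤ α := Finset.mem_Iic.1 hβ
      have hsum' : β' + (α' - β') = α' := add_tsub_cancel_of_le hle'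
      have hsum : β + (α - β) = α := add_tsub_cancel_of_le hle
      -- memberships
      have hm1 : toLex β' ∈ rowsA :=
        Finset.mem_filter.2 ⟨mem_degSet (hA _ _ hAβ).1, ⟨β, hAβ⟩⟩
      have hm2 : toLex (α' - β') ∈ rowsB :=
        Finset.mem_filter.2 ⟨mem_degSet (hB _ _ hBβ).1, ⟨α - β, hBβ⟩⟩
      have h1 : toLex β' ≤ a' := Finset.le_max' rowsA _ hm1
      have h2 : toLex (α' - β') ≤ b' := Finset.le_max' rowsB _ hm2
      have hsum'' : toLex β' + toLex (α' - β') = a' + b' := by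
        show toLex (β' + (α' - β')) = a' + b'
        rw [hsum']
        rfl
      obtain ⟨e1, e2⟩ := cancel_max h1 h2 hsum''
      -- now columns
      have hβ'a : β' = ofLex a' := congrArg ofLex e1
      have hδ'b : α' - β' = ofLex b' := congrArg ofLex e2
      have hm3 : toLex β ∈ colsA := by
        refine Finset.mem_filter.2 ⟨mem_degSet (hA _ _ hAβ).2, ?_⟩
        rw [← hβ'a]; exact hAβ
      have hm4 : toLex (α - β) ∈ colsB := by
        refine Finset.mem_filter.2 ⟨mem_degSet (hB _ _ hBβ).2, ?_⟩
        rw [← hδ'b]; exact hBβ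
      have h3 : toLex β ≤ a := Finset.le_max' colsA _ hm3
      have h4 : toLex (α - β) ≤ b := Finset.le_max' colsB _ hm4
      have hsum2 : toLex β + toLex (α - β) = a + b := by
        show toLex (β + (α - β)) = a + b
        rw [hsum]
        rfl
      obtain ⟨e3, _⟩ := cancel_max h3 h4 hsum2
      have hβa : β = ofLex a := congrArg ofLex e3
      rcases hne with hne | hne
      · exact hne hβ'a
      · exact hne hβa
    -- compute the entry
    have hmema' : ofLex a' ∈ Finset.Iic α' := Finset.mem_Iic.2 le_self_add
    have hmema : ofLex a ∈ Finset.Iic α := Finset.mem_Iic.2 le_self_add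
    have hentry : odot A B α' α =
        (mchoose α (ofLex a) : F) * A (ofLex a') (ofLex a) * B (ofLex b') (ofLex b) := by
      rw [odot]
      rw [Finset.sum_eq_single_of_mem (ofLex a') hmema' ?_]
      · rw [Finset.sum_eq_single_of_mem (ofLex a) hmema ?_]
        · have e1 : α' - ofLex a' = ofLex b' := by rw [hα']; exact add_tsub_cancel_left _ _
          have e2 : α - ofLex a = ofLex b := by rw [hα]; exact add_tsub_cancel_left _ _
          rw [e1, e2]
        · intro β hβ hne
          exact key _ hmema' _ hβ (Or.inr hne)
      · intro β' hβ' hne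
        apply Finset.sum_eq_zero
        intro β hβ
        exact key _ hβ' _ hβ (Or.inl hne)
    have hne0 : odot A B α' α ≠ 0 := by
      rw [hentry]
      have hpos : 0 < mchoose α (ofLex a) := by rw [hα]; exact mchoose_pos _ _
      exact mul_ne_zero (mul_ne_zero (Nat.cast_ne_zero.2 hpos.ne') hAa) hBb
    rw [h] at hne0
    exact hne0 rfl
  · rintro (h | h) <;> subst h <;> funext α' α <;>
      simp [odot]
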